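/- Let k be a commutative ring, let R and A be associative unital k-algebras, and let η : R → A be a k-algebra homomorphism. There is a bijective correspondence between: (a) right A-module structures ⋅ on the k-module R which extend the right regular R-module structure, in the sense that r ⋅ η(r') = r r' for all r, r' ∈ R; and (b) k-linear maps χ : A → R (called right characters) satisfying (i) χ(a η(r)) = χ(a) r for all a ∈ A, r ∈ R, (ii) χ(a a') = χ(η(χ(a)) a') for all a, a' ∈ A, and (iii) χ(1_A) = 1_R. The correspondence sends a right A-module structure to χ(a) := 1_R ⋅ a, and a right character χ to the action r ⋅ a := χ(η(r) a). -/

import Mathlib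

/-!
Statement 1: For a `k`-algebra homomorphism `η : R → A`, there is a bijective
correspondence between right `A`-module structures on the `k`-module `R`
extending the right regular `R`-module structure, and right characters
`χ : A → R`.  (Paper: Lemma 2.4.)
-/

/-- A right `A`-module structure on the `k`-module `R` which extends the right
regular `R`-module structure via `η : R → A`. -/
structure RightModuleExtendingRegular (k R A : Type*) [CommRing k] [Ring R]
    [Algebra k R] [Ring A] [Algebra k A] (η : R →ₐ[k] A) where
  act : R → A → R
  act_add_left : ∀ (r r' : R) (a : A), act (r + r') a = act r a + act r' a
  act_add_right : ∀ (r : R) (a a' : A), act r (a + a') = act r a + act r a'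
  act_smul_left : ∀ (c : k) (r : R) (a : A), act (c • r) a = c • act r a
  act_smul_right : ∀ (c : k) (r : R) (a : A), act r (c • a) = c • act r a
  act_one : ∀ r : R, act r 1 = r
  act_mul : ∀ (r : R) (a a' : A), act r (a * a') = act (act r a) a'
  extends_regular : ∀ r r' : R, act r (η r') = r * r'

/-- A right character on the `R`-ring `(A, η)`: a `k`-linear map `χ : A → R`
satisfying right `R`-linearity, associativity and unitality. -/
structure RightCharacter (k R A : Type*) [CommRing k] [Ring R]
    [Algebra k R] [Ring A] [Algebra k A] (η : R →ₐ[k] A) where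
  χ : A →ₗ[k] R
  map_mul_eta : ∀ (a : A) (r : R), χ (a * η r) = χ a * r
  char_assoc : ∀ a a' : A, χ (a * a') = χ (η (χ a) * a')
  char_one : χ 1 = 1

/-- Lemma 2.4: right `A`-module structures on `R` extending the
right regular `R`-module structure correspond bijectively to right characters
`χ : A → R`; the correspondence sends an action to `χ a = 1 ⋅ a`, and a right
character to the action `r ⋅ a = χ (η r * a)`. -/
theorem rightModuleExt_equiv_rightCharacter (k R A : Type*) [CommRing k] [Ring R]
    [Algebra k R] [Ring A] [Algebra k A] (η : R →ₐ[k] A) :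
    ∃ e : RightModuleExtendingRegular k R A η ≃ RightCharacter k R A η,
      (∀ (d : RightModuleExtendingRegular k R A η) (a : A),
        (e d).χ a = d.act 1 a) ∧
      (∀ (c : RightCharacter k R A η) (r : R) (a : A),
        (e.symm c).act r a = c.χ (η r * a)) := by
  refine ⟨{
    toFun := fun d => {
      χ := { toFun := fun a => d.act 1 a,
             map_add' := fun a a' => d.act_add_right 1 a a',
             map_smul' := fun c a => d.act_smul_right c 1 a }
      map_mul_eta := fun a r => by
        simp only [LinearMap.coe_mk, AddHom.coe_mk]
        rw [d.act_mul, d.extends_regular]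
      char_assoc := fun a a' => by
        simp only [LinearMap.coe_mk, AddHom.coe_mk]
        rw [d.act_mul, d.act_mul, d.extends_regular, one_mul]
      char_one := d.act_one 1 }
    invFun := fun c => {
      act := fun r a => c.χ (η r * a)
      act_add_left := fun r r' a => by rw [map_add, add_mul, map_add]
      act_add_right := fun r a a' => by rw [mul_add, map_add]
      act_smul_left := fun x r a => by rw [map_smul, smul_mul_assoc, map_smul]
      act_smul_right := fun x r a => by rw [mul_smul_comm, map_smul]
      act_one := fun r => by
        rw [mul_one]
        have := c.map_mul_eta 1 r
        rw [one_mul] at this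
        rw [this, c.char_one, one_mul]
      act_mul := fun r a a' => by
        rw [← mul_assoc, c.char_assoc (η r * a) a']
      extends_regular := fun r r' => by
        have := c.map_mul_eta (η r) r'
        rw [this]
        have h := c.map_mul_eta 1 r
        rw [one_mul] at h
        rw [h, c.char_one, one_mul] }
    left_inv := fun d => by
      cases d with
      | mk act h1 h2 h3 h4 h5 h6 h7 =>
        simp only [RightModuleExtendingRegular.mk.injEq]
        funext r a
        simp only [LinearMap.coe_mk, AddHom.coe_mk]
        rw [h6, h7, one_mul]
    right_inv := fun c => by
      cases c with
      | mk f h1 h2 h3 =>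
        simp only [RightCharacter.mk.injEq]
        ext a
        simp only [LinearMap.coe_mk, AddHom.coe_mk, map_one, one_mul]
  }, fun d a => rfl, fun c r a => rfl⟩
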